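/- Every solution (x(t), y(t)) of the system ẋ = -y, ẏ = x(1+y)³ with initial condition in the region {y > -1} where x² + y²/(1+y)² < 1 is periodic with period independent of the initial condition equal to 2π (isochronous center at the origin). -/

import Mathlib

open Real Set

lemma aux_inj_19 (a1 b1 a2 b2 : ℝ) (hn : a1 ^ 2 + b1 ^ 2 = a2 ^ 2 + b2 ^ 2)
    (hlt : a1 ^ 2 + b1 ^ 2 < 1)
    (E1 : a2 * Real.cos a2 - b2 * Real.sin a2 = a1 * Real.cos a1 - b1 * Real.sin a1)
    (E2 : a2 * Real.sin a2 + b2 * Real.cos a2 = a1 * Real.sin a1 + b1 * Real.cos a1) :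
    a2 = a1 ∧ b2 = b1 := by
  have p2 := Real.sin_sq_add_cos_sq a2
  have R1 : a2 = a1 * Real.cos (a2 - a1) + b1 * Real.sin (a2 - a1) := by
    rw [Real.cos_sub, Real.sin_sub]
    linear_combination Real.cos a2 * E1 + Real.sin a2 * E2 - a2 * p2
  have R2 : b2 = -a1 * Real.sin (a2 - a1) + b1 * Real.cos (a2 - a1) := by
    rw [Real.cos_sub, Real.sin_sub]
    linear_combination -Real.sin a2 * E1 + Real.cos a2 * E2 - b2 * p2
  set d := a2 - a1 with hd
  clear_value d
  have hd0 : d = 0 := by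
    by_contra hd0
    have hcos := Real.one_sub_sq_div_two_lt_cos hd0
    have hEd : d = a1 * (Real.cos d - 1) + b1 * Real.sin d := by
      linear_combination R1 + hd
    have hdp : 0 < d ^ 2 := by positivity
    have pd := Real.sin_sq_add_cos_sq d
    have hEd2 : d ^ 2 = (a1 * (Real.cos d - 1) + b1 * Real.sin d) ^ 2 := by
      linear_combination (d + a1 * (Real.cos d - 1) + b1 * Real.sin d) * hEd
    have c2 : (Real.cos d - 1) ^ 2 + Real.sin d ^ 2 = 2 - 2 * Real.cos d := by
      linear_combination pd
    have cs : d ^ 2 ≤ (a1 ^ 2 + b1 ^ 2) * (2 - 2 * Real.cos d) := by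
      nlinarith [hEd2, sq_nonneg (a1 * Real.sin d - b1 * (Real.cos d - 1)), c2]
    have hb : 2 - 2 * Real.cos d < d ^ 2 := by linarith
    have hnn : (0:ℝ) ≤ a1 ^ 2 + b1 ^ 2 := by positivity
    nlinarith [cs, mul_le_mul_of_nonneg_left hb.le hnn, mul_pos (sub_pos.mpr hlt) hdp]
  have ha : a2 = a1 := by
    have h := hd0; rw [hd] at h; linarith
  refine ⟨ha, ?_⟩
  rw [hd0] at R2
  simpa using R2

/-- Isochronicity of the center at the origin of ẋ = -y, ẏ = x(1+y)³:
every solution starting in the region {y > -1, x² + y²/(1+y)² < 1}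
is periodic of period 2π. -/
theorem stmt_19 (x y : ℝ → ℝ)
    (hx : ∀ t, HasDerivAt x (-(y t)) t)
    (hy : ∀ t, HasDerivAt y (x t * (1 + y t) ^ 3) t)
    (h0 : y 0 > -1)
    (hI : (x 0) ^ 2 + (y 0) ^ 2 / (1 + y 0) ^ 2 < 1) :
    ∀ t : ℝ, x (t + 2 * Real.pi) = x t ∧ y (t + 2 * Real.pi) = y t := by
  have cx : Continuous x := continuous_iff_continuousAt.mpr fun t => (hx t).continuousAt
  have cy : Continuous y := continuous_iff_continuousAt.mpr fun t => (hy t).continuousAt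
  set v : ℝ → ℝ := fun t => y t / (1 + y t) with hvdef
  set F : ℝ → ℝ := fun t => x t ^ 2 + v t ^ 2 with hFdef
  have hv : ∀ t, 1 + y t ≠ 0 → HasDerivAt v (x t * (1 + y t)) t := by
    intro t ht
    have h1 : HasDerivAt (fun s => 1 + y s) (x t * (1 + y t) ^ 3) t := by
      exact (hy t).const_add 1
    have h2 := (hy t).div h1 ht
    exact h2.congr_deriv (by rw [div_eq_iff (pow_ne_zero 2 ht)]; ring)
  have hyv : ∀ t, 1 + y t ≠ 0 → v t * (1 + y t) = y t := by
    intro t ht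
    show (y t / (1 + y t)) * (1 + y t) = y t
    field_simp
  have hF' : ∀ t, 1 + y t ≠ 0 → HasDerivAt F 0 t := by
    intro t ht
    have h2 := ((hx t).pow 2).add ((hv t ht).pow 2)
    have h3 := hyv t ht
    exact h2.congr_deriv (by linear_combination (2 * x t) * h3)
  have key : ∀ t, 0 < 1 + y t → F t < 1 → 1/2 < 1 + y t := by
    intro t h1 h2
    have hv2 : (v t) ^ 2 < 1 := by
      have := sq_nonneg (x t)
      have hFt : x t ^ 2 + v t ^ 2 < 1 := h2
      linarith
    have h4 : -1 < v t := by nlinarith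
    have h5 : (1 - v t) * (1 + y t) = 1 := by
      show (1 - y t / (1 + y t)) * (1 + y t) = 1
      field_simp
      ring
    nlinarith [mul_pos (show (0:ℝ) < 1 + v t by linarith) h1]
  have hF0 : F 0 < 1 := by
    show x 0 ^ 2 + (y 0 / (1 + y 0)) ^ 2 < 1
    rw [div_pow]; exact hI
  have h00 : (0:ℝ) < 1 + y 0 := by linarith
  have main : ∀ t, 1/2 ≤ 1 + y t ∧ F t = F 0 := by
    have mvt : ∀ a b : ℝ, a < b → (∀ c ∈ Set.Icc a b, 0 < 1 + y c) → F a = F b := by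
      intro a b hab hposc
      have hderiv : ∀ c ∈ Set.Ioo a b, HasDerivAt F ((fun _ => (0:ℝ)) c) c := fun c hc =>
        hF' c (ne_of_gt (hposc c (Set.Ioo_subset_Icc_self hc)))
      have hcont : ContinuousOn F (Set.Icc a b) := fun c hc =>
        ((hF' c (ne_of_gt (hposc c hc))).continuousAt).continuousWithinAt
      obtain ⟨c, hc, hceq⟩ := exists_hasDerivAt_eq_slope F (fun _ => 0) hab hcont hderiv
      have hba : b - a ≠ 0 := by linarith
      field_simp at hceq
      linarith
    set U : Set ℝ := {t | 1/2 ≤ 1 + y t ∧ F t = F 0} with hU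
    have hopen : IsOpen U := by
      rw [Metric.isOpen_iff]
      rintro t ⟨ht1, ht2⟩
      have hmem : {s | 0 < 1 + y s} ∈ nhds t := by
        refine IsOpen.mem_nhds (isOpen_lt continuous_const (continuous_const.add cy)) ?_
        show (0:ℝ) < 1 + y t; linarith
      obtain ⟨ε, hε, hball⟩ := Metric.mem_nhds_iff.mp hmem
      refine ⟨ε, hε, ?_⟩
      intro s hs
      have hpos : ∀ c ∈ Metric.ball t ε, 0 < 1 + y c := fun c hc => hball hc
      rw [Real.ball_eq_Ioo] at hs
      have hpos' : ∀ c ∈ Set.Ioo (t - ε) (t + ε), 0 < 1 + y c := fun c hc =>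
        hpos c (by rw [Real.ball_eq_Ioo]; exact hc)
      have hFs : F s = F t := by
        rcases lt_trichotomy s t with h | h | h
        · exact mvt s t h fun c hc => hpos' c ⟨lt_of_lt_of_le hs.1 hc.1,
            lt_of_le_of_lt hc.2 (by linarith)⟩
        · rw [h]
        · exact (mvt t s h fun c hc => hpos' c ⟨lt_of_lt_of_le (by linarith) hc.1,
            lt_of_le_of_lt hc.2 hs.2⟩).symm
      have hFs0 : F s = F 0 := by rw [hFs, ht2]
      have hys : 0 < 1 + y s := hpos' s hs
      exact ⟨(key s hys (by rw [hFs0]; exact hF0)).le, hFs0⟩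
    have hclosed : IsClosed U := by
      have hC1 : IsClosed {t : ℝ | 1/2 ≤ 1 + y t} :=
        isClosed_le continuous_const (continuous_const.add cy)
      have hvc : ContinuousOn v {t : ℝ | 1/2 ≤ 1 + y t} := by
        apply ContinuousOn.div cy.continuousOn (continuous_const.add cy).continuousOn
        intro t ht
        have : (1:ℝ)/2 ≤ 1 + y t := ht
        positivity
      have hFc : ContinuousOn F {t : ℝ | 1/2 ≤ 1 + y t} :=
        ((cx.continuousOn).pow 2).add (hvc.pow 2)
      have hUeq : U = {t : ℝ | 1/2 ≤ 1 + y t} ∩ F ⁻¹' {F 0} := by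
        ext t; simp [hU]
      rw [hUeq]
      exact hFc.preimage_isClosed_of_isClosed hC1 isClosed_singleton
    have hUuniv : U = Set.univ :=
      IsClopen.eq_univ ⟨hclosed, hopen⟩ ⟨0, (key 0 h00 hF0).le, rfl⟩
    intro t
    have : t ∈ U := hUuniv ▸ Set.mem_univ t
    exact this
  have hpos : ∀ t, (0:ℝ) < 1 + y t := fun t => lt_of_lt_of_le one_half_pos (main t).1
  have hne : ∀ t, 1 + y t ≠ 0 := fun t => ne_of_gt (hpos t)
  -- linearizing coordinates
  have hX' : ∀ t, HasDerivAt (fun s => x s * Real.cos (x s) - v s * Real.sin (x s))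
      (-(x t * Real.sin (x t) + v t * Real.cos (x t))) t := by
    intro t
    have h := ((hx t).mul ((hx t).cos)).sub ((hv t (hne t)).mul ((hx t).sin))
    exact h.congr_deriv (by linear_combination (Real.cos (x t)) * hyv t (hne t))
  have hY' : ∀ t, HasDerivAt (fun s => x s * Real.sin (x s) + v s * Real.cos (x s))
      (x t * Real.cos (x t) - v t * Real.sin (x t)) t := by
    intro t
    have h := ((hx t).mul ((hx t).sin)).add ((hv t (hne t)).mul ((hx t).cos))
    exact h.congr_deriv (by linear_combination (Real.sin (x t)) * hyv t (hne t))
  set X : ℝ → ℝ := fun s => x s * Real.cos (x s) - v s * Real.sin (x s) with hXdef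
  set Y : ℝ → ℝ := fun s => x s * Real.sin (x s) + v s * Real.cos (x s) with hYdef
  have hA' : ∀ t, HasDerivAt (fun s => X s * Real.cos s + Y s * Real.sin s) 0 t := by
    intro t
    have h := ((hX' t).mul (Real.hasDerivAt_cos t)).add ((hY' t).mul (Real.hasDerivAt_sin t))
    exact h.congr_deriv (by ring)
  have hB' : ∀ t, HasDerivAt (fun s => -(X s * Real.sin s) + Y s * Real.cos s) 0 t := by
    intro t
    have h := (((hX' t).mul (Real.hasDerivAt_sin t)).neg).add ((hY' t).mul (Real.hasDerivAt_cos t))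
    exact h.congr_deriv (by ring)
  have hAconst : ∀ s t : ℝ, X s * Real.cos s + Y s * Real.sin s
      = X t * Real.cos t + Y t * Real.sin t :=
    fun s t => is_const_of_deriv_eq_zero (fun r => (hA' r).differentiableAt)
      (fun r => (hA' r).deriv) s t
  have hBconst : ∀ s t : ℝ, -(X s * Real.sin s) + Y s * Real.cos s
      = -(X t * Real.sin t) + Y t * Real.cos t :=
    fun s t => is_const_of_deriv_eq_zero (fun r => (hB' r).differentiableAt)
      (fun r => (hB' r).deriv) s t
  intro t
  have pyth := Real.sin_sq_add_cos_sq t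
  have eA := hAconst (t + 2 * Real.pi) t
  have eB := hBconst (t + 2 * Real.pi) t
  rw [Real.cos_add_two_pi, Real.sin_add_two_pi] at eA eB
  have hXp : X (t + 2 * Real.pi) = X t := by
    linear_combination Real.cos t * eA - Real.sin t * eB + (X t - X (t + 2 * Real.pi)) * pyth
  have hYp : Y (t + 2 * Real.pi) = Y t := by
    linear_combination Real.sin t * eA + Real.cos t * eB + (Y t - Y (t + 2 * Real.pi)) * pyth
  have hFt : F t = F 0 := (main t).2
  have hFt2 : F (t + 2 * Real.pi) = F 0 := (main (t + 2 * Real.pi)).2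
  have hnorm : x t ^ 2 + v t ^ 2 = x (t + 2 * Real.pi) ^ 2 + v (t + 2 * Real.pi) ^ 2 := by
    have h1 : F t = x t ^ 2 + v t ^ 2 := rfl
    have h2 : F (t + 2 * Real.pi) = x (t + 2 * Real.pi) ^ 2 + v (t + 2 * Real.pi) ^ 2 := rfl
    rw [← h1, ← h2, hFt, hFt2]
  have hlt : x t ^ 2 + v t ^ 2 < 1 := by
    have h1 : F t = x t ^ 2 + v t ^ 2 := rfl
    rw [← h1, hFt]; exact hF0
  obtain ⟨hxeq, hveq⟩ := aux_inj_19 (x t) (v t) (x (t + 2 * Real.pi)) (v (t + 2 * Real.pi))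
    hnorm hlt hXp hYp
  refine ⟨hxeq, ?_⟩
  have hveq' : y (t + 2 * Real.pi) / (1 + y (t + 2 * Real.pi)) = y t / (1 + y t) := hveq
  rw [div_eq_div_iff (hne _) (hne _)] at hveq'
  linear_combination hveq'
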